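/- For 0 < λ < μ, the smallest positive solution η of x = exp(−μ(1−x)/λ) satisfies η < λ/μ, and consequently the fork-join lower bound λH_n/(μ(1-η)) is strictly smaller than the upper bound λH_n/(μ(1-λ/μ)) for every n ≥ 1. -/

import Mathlib

/-- The smallest positive solution `η ∈ [0,1)` of `x = exp(−μ(1−x)/λ)` satisfies
`η < λ/μ`; consequently the fork-join lower bound `λH_n/(μ(1-η))` is strictly
smaller than the upper bound `λH_n/(μ(1-λ/μ))` for every `n ≥ 1`. -/
theorem stmt_8 (lam mu eta : ℝ) (hlam : 0 < lam) (hlt : lam < mu)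
    (heta : eta ∈ Set.Ico (0 : ℝ) 1)
    (hfix : eta = Real.exp (-(mu * (1 - eta)) / lam)) :
    eta < lam / mu
    ∧ ∀ n : ℕ, 1 ≤ n →
        lam * (∑ i ∈ Finset.range n, (1 : ℝ) / (i + 1)) / (mu * (1 - eta))
          < lam * (∑ i ∈ Finset.range n, (1 : ℝ) / (i + 1)) / (mu * (1 - lam / mu)) := by
  obtain ⟨h0, h1⟩ := heta
  have hmu : 0 < mu := hlam.trans hlt
  have h1e : (0:ℝ) < 1 - eta := by linarith
  have ht : 0 < mu * (1 - eta) / lam := div_pos (mul_pos hmu h1e) hlam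
  -- exp(-t) < 1/(1+t) for t > 0
  have hexp : Real.exp (-(mu * (1 - eta)) / lam) < 1 / (1 + mu * (1 - eta) / lam) := by
    rw [neg_div, Real.exp_neg]
    rw [one_div]
    apply inv_strictAnti₀ (by linarith)
    have := Real.add_one_lt_exp (x := mu * (1 - eta) / lam) (by positivity)
    linarith
  have hkey : eta < 1 / (1 + mu * (1 - eta) / lam) := hfix.trans_lt hexp
  have hdenom : 0 < 1 + mu * (1 - eta) / lam := by linarith
  have h2 : eta * (1 + mu * (1 - eta) / lam) < 1 := by
    rw [lt_div_iff₀ hdenom] at hkey; linarith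
  have h3 : eta * (lam + mu * (1 - eta)) < lam := by
    have hl := hlam.ne'
    have : eta * (1 + mu * (1 - eta) / lam) * lam < 1 * lam :=
      mul_lt_mul_of_pos_right h2 hlam
    field_simp at this
    nlinarith
  have hmain : eta < lam / mu := by
    rw [lt_div_iff₀ hmu]
    nlinarith [mul_pos hmu (sub_pos.mpr h1)]
  constructor
  · exact hmain
  · intro n hn
    have hH : 0 < ∑ i ∈ Finset.range n, (1 : ℝ) / (i + 1) := by
      apply Finset.sum_pos
      · intro i _; positivity
      · exact Finset.nonempty_range_iff.mpr (by omega)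
    have hnum : 0 < lam * ∑ i ∈ Finset.range n, (1 : ℝ) / (i + 1) := mul_pos hlam hH
    have hr : lam / mu < 1 := (div_lt_one hmu).mpr hlt
    have heq : mu * (1 - lam / mu) = mu - lam := by field_simp
    apply div_lt_div_of_pos_left hnum
    · rw [heq]; linarith
    · have : lam / mu < 1 := hr
      nlinarith
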